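/- Let Σ be a finite alphabet and n, k positive integers. Suppose Gen : {0,1}^s → ({0,1}^n)^k is a γ-PRG for (k,n,Σ) block decision trees and Ext : {0,1}^s × {0,1}^d → {0,1}^s is an average-case (s − k·log₂|Σ|, β)-extractor. Define Gen′ : {0,1}^{s+d} → ({0,1}^n)^{2k} by Gen′(x,y) = (Gen(x), Gen(Ext(x,y))). Then Gen′ is a (2γ+β)-PRG for (2k,n,Σ) block decision trees. -/

import Mathlib

open Classical

/-- Probability of `P` under the uniform distribution on a finite type. -/
noncomputable def pr {α : Type*} [Fintype α] (P : α → Prop) : ℝ :=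
  ((Finset.univ.filter P).card : ℝ) / (Fintype.card α : ℝ)

/-- `f : {0,1}^n → ℝ^d` is `(ε,δ)`-concentrated at `μ`. -/
def Concentrated (n d : ℕ) (ε δ : ℝ)
    (f : (Fin n → Bool) → Fin d → ℝ) (μ : Fin d → ℝ) : Prop :=
  pr (fun X : Fin n → Bool => ∃ j, |f X j - μ j| > ε) ≤ δ

/-- A deterministic owner for `k` rounds of `(ε,δ)`-concentrated functions
`{0,1}^n → ℝ^d`: given the history of responses `Y_1,…,Y_{i-1}`, it produces
a function `f_i` together with a point `μ_i` at which `f_i` is concentrated. -/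
structure Owner (n k d : ℕ) (ε δ : ℝ) where
  act : List (Fin d → ℝ) → (((Fin n → Bool) → Fin d → ℝ) × (Fin d → ℝ))
  conc : ∀ ys : List (Fin d → ℝ), ys.length < k →
    Concentrated n d ε δ (act ys).1 (act ys).2

/-- A one-query steward with randomness complexity `m`: in each round it chooses
a query point from its randomness and the past query answers, and it chooses a
response from its randomness and the past and current query answers. -/
structure Steward (n k d m : ℕ) where
  q : (Fin m → Bool) → List (Fin d → ℝ) → (Fin n → Bool)
  r : (Fin m → Bool) → List (Fin d → ℝ) → (Fin d → ℝ) → (Fin d → ℝ)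

/-- The interaction `O ↔ S(Z)` for `i` rounds: the list of triples `(Y_i, W_i, μ_i)`. -/
noncomputable def run {n k d m : ℕ} {ε δ : ℝ} (O : Owner n k d ε δ) (S : Steward n k d m)
    (Z : Fin m → Bool) : ℕ → List ((Fin d → ℝ) × (Fin d → ℝ) × (Fin d → ℝ))
  | 0 => []
  | i + 1 =>
    let h := run O S Z i
    let fμ := O.act (h.map fun p => p.1)
    let X := S.q Z (h.map fun p => p.2.1)
    let W := fμ.1 X
    h ++ [(S.r Z (h.map fun p => p.2.1) W, W, fμ.2)]

/-- `S` is a one-query `(ε',δ')`-steward for `k` adaptively chosen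
`(ε,δ)`-concentrated functions `{0,1}^n → ℝ^d`. -/
def IsSteward (n k d m : ℕ) (ε δ ε' δ' : ℝ) (S : Steward n k d m) : Prop :=
  ∀ O : Owner n k d ε δ,
    pr (fun Z : Fin m → Bool =>
      ∃ p ∈ run O S Z k, ∃ j : Fin d, |p.1 j - p.2.2 j| > ε') ≤ δ'

/-- The output string of a `(k,n,Σ)` block decision tree, given as the family of
node functions `v_w` indexed by strings `w`, on input the list `Xs` of blocks:
`σ_i = v_{(σ_1,…,σ_{i-1})}(X_i)`. -/
def treeOutList {A I : Type*} (v : List A → I → A) (Xs : List I) : List A :=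
  Xs.foldl (fun w X => w ++ [v w X]) []

/-- `Gen` is a `γ`-PRG for `(k,n,A)` block decision trees: for every tree, the total
variation distance between the output distribution on pseudorandom inputs and on
truly random inputs is at most `γ`. -/
def IsBDTPRG (n k s : ℕ) (A : Type*) [Fintype A] (γ : ℝ)
    (Gen : (Fin s → Bool) → Fin k → (Fin n → Bool)) : Prop :=
  ∀ v : List A → (Fin n → Bool) → A,
    (1 / 2) * ∑ σ : Fin k → A,
      |pr (fun x : Fin s → Bool => treeOutList v (List.ofFn (Gen x)) = List.ofFn σ)
        - pr (fun X : Fin k → (Fin n → Bool) => treeOutList v (List.ofFn X) = List.ofFn σ)|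
      ≤ γ

/-- `prMass p P`: probability of the event `P` under the mass function `p`. -/
noncomputable def prMass {Ω : Type*} [Fintype Ω] (p : Ω → ℝ) (P : Ω → Prop) : ℝ :=
  ∑ ω ∈ Finset.univ.filter P, p ω

/-- `Ext : {0,1}^s × {0,1}^d → {0,1}^m` is an average-case `(κ, β)`-extractor:
for every pair of random variables `(X, V)` on a common finite probability space
with `H̃_∞(X|V) ≥ κ` (equivalently, `E_{v∼V}[max_x Pr[X=x | V=v]] ≤ 2^{-κ}`),
the joint distributions of `(V, Ext(X,Y))` (with `Y` uniform, independent of `(X,V)`)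
and `(V, Z)` (with `Z` uniform, independent of `V`) are `β`-close in total variation. -/
def IsAvgExtractor (s d m : ℕ) (κ β : ℝ)
    (Ext : (Fin s → Bool) → (Fin d → Bool) → (Fin m → Bool)) : Prop :=
  ∀ (Ω : Type) [Fintype Ω] (Vt : Type) [Fintype Vt]
    (p : Ω → ℝ) (X : Ω → (Fin s → Bool)) (V : Ω → Vt),
    (∀ ω, 0 ≤ p ω) → (∑ ω, p ω) = 1 →
    (∑ v : Vt, ⨆ x : Fin s → Bool, prMass p (fun ω => X ω = x ∧ V ω = v)) ≤ (2 : ℝ) ^ (-κ) →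
    (1 / 2) * ∑ v : Vt, ∑ z : Fin m → Bool,
      |(∑ y : Fin d → Bool, prMass p (fun ω => V ω = v ∧ Ext (X ω) y = z)) / 2 ^ d
        - prMass p (fun ω => V ω = v) / 2 ^ m| ≤ β

section PrLemmas

variable {α β : Type*} [Fintype α] [Fintype β]

lemma pr_nonneg (P : α → Prop) : 0 ≤ pr P := by
  unfold pr; positivity

lemma pr_congr {P Q : α → Prop} (h : ∀ ω, P ω ↔ Q ω) : pr P = pr Q := by
  unfold pr
  have : Finset.univ.filter P = Finset.univ.filter Q :=
    Finset.filter_congr (fun x _ => by simpa using h x)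
  rw [this]

lemma pr_eq_sum (P : α → Prop) :
    pr P = (∑ ω : α, if P ω then (1:ℝ) else 0) / (Fintype.card α : ℝ) := by
  unfold pr
  rw [Finset.sum_boole]

lemma sum_pr_fiber [Nonempty α] (g : α → β) :
    ∑ b : β, pr (fun ω => g ω = b) = 1 := by
  simp only [pr_eq_sum]
  rw [← Finset.sum_div, Finset.sum_comm]
  have : ∀ ω : α, ∑ b : β, (if g ω = b then (1:ℝ) else 0) = 1 := by
    intro ω; simp
  simp only [this, Finset.sum_const, Finset.card_univ, nsmul_eq_mul, mul_one]
  rw [div_self]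
  exact_mod_cast Fintype.card_ne_zero

lemma pr_equiv {α' : Type*} [Fintype α'] (e : α' ≃ α) (P : α → Prop) :
    pr P = pr (fun ω' => P (e ω')) := by
  unfold pr
  rw [Fintype.card_congr e]
  congr 1
  norm_cast
  apply Finset.card_bij (fun a _ => e.symm a)
  · intro a ha; simp only [Finset.mem_filter, Finset.mem_univ, true_and] at ha ⊢; simpa using ha
  · intro a _ b _ h; exact e.symm.injective h
  · intro b hb; refine ⟨e b, ?_, by simp⟩
    simp only [Finset.mem_filter, Finset.mem_univ, true_and] at hb ⊢; exact hb

lemma pr_prod (P : α → Prop) (Q : β → Prop) :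
    pr (fun p : α × β => P p.1 ∧ Q p.2) = pr P * pr Q := by
  simp only [pr_eq_sum, Fintype.card_prod, Fintype.sum_prod_type]
  rw [div_mul_div_comm]
  congr 1
  · rw [Finset.sum_mul_sum]
    apply Finset.sum_congr rfl; intro a _
    apply Finset.sum_congr rfl; intro b _
    by_cases h1 : P a <;> by_cases h2 : Q b <;> simp [h1, h2]
  · push_cast; ring

lemma pr_fiber_decomp (g : α → β) (P : α → Prop) (F : β → Prop) :
    pr (fun ω => P ω ∧ F (g ω)) = ∑ b : β, if F b then pr (fun ω => P ω ∧ g ω = b) else 0 := by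
  have h1 : ∀ b : β, (if F b then pr (fun ω => P ω ∧ g ω = b) else 0)
      = pr (fun ω => (P ω ∧ F (g ω)) ∧ g ω = b) := by
    intro b
    split_ifs with hb
    · refine pr_congr (fun ω => ?_)
      constructor
      · rintro ⟨hP, hg⟩; exact ⟨⟨hP, hg ▸ hb⟩, hg⟩
      · rintro ⟨⟨hP, _⟩, hg⟩; exact ⟨hP, hg⟩
    · symm
      have : ∀ ω, ((P ω ∧ F (g ω)) ∧ g ω = b) ↔ False := by
        intro ω; constructor
        · rintro ⟨⟨_, hF⟩, hg⟩; exact hb (hg ▸ hF)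
        · exact False.elim
      rw [pr_congr this]
      unfold pr; simp
  simp only [h1]
  simp only [pr_eq_sum, ← Finset.sum_div]
  congr 1
  rw [Finset.sum_comm]
  congr 1; funext ω
  by_cases h : P ω ∧ F (g ω) <;> simp [h]

end PrLemmas


section TreeLemmas

variable {A I : Type*}

lemma foldl_step (v : List A → I → A) (w : List A) (L : List I) :
    L.foldl (fun w X => w ++ [v w X]) w = w ++ treeOutList (fun w' X => v (w ++ w') X) L := by
  induction L generalizing v w with
  | nil => simp [treeOutList]
  | cons X L ih =>
    simp only [List.foldl_cons, treeOutList, List.foldl_cons, List.nil_append,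
      List.append_nil]
    rw [ih, ih (fun w' X => v (w ++ w') X) [v w X]]
    simp [List.append_assoc]

lemma treeOutList_length (v : List A → I → A) (L : List I) :
    (treeOutList v L).length = L.length := by
  suffices h : ∀ (w : List I) (u : List A),
      (w.foldl (fun w X => w ++ [v w X]) u).length = u.length + w.length by
    simpa [treeOutList] using h L []
  intro w
  induction w with
  | nil => simp
  | cons X L ih => intro u; simp [ih]; omega

lemma treeOutList_append (v : List A → I → A) (L₁ L₂ : List I) :
    treeOutList v (L₁ ++ L₂) = treeOutList v L₁ ++
      treeOutList (fun w' X => v (treeOutList v L₁ ++ w') X) L₂ := by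
  rw [treeOutList, List.foldl_append, ← treeOutList, foldl_step]

noncomputable def toFn {k : ℕ} (L : List A) (h : L.length = k) : Fin k → A :=
  fun i => L.get (Fin.cast h.symm i)

lemma toFn_eq_iff {k : ℕ} (L : List A) (h : L.length = k) (σ : Fin k → A) :
    toFn L h = σ ↔ L = List.ofFn σ := by
  constructor
  · intro he
    apply List.ext_get (by simp [h])
    intro i h1 h2
    subst he
    rw [List.get_ofFn]
    rfl
  · intro he
    subst he
    funext i
    rw [toFn, List.get_ofFn]
    congr 1

def splitEquiv (a b : ℕ) (α : Type*) : (Fin (a + b) → α) ≃ (Fin a → α) × (Fin b → α) where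
  toFun z := (fun i => z (Fin.castAdd b i), fun i => z (Fin.natAdd a i))
  invFun p := Fin.append p.1 p.2
  left_inv z := by
    funext i
    show Fin.append (fun i => z (Fin.castAdd b i)) (fun i => z (Fin.natAdd a i)) i = z i
    refine Fin.addCases (fun j => ?_) (fun j => ?_) i
    · rw [Fin.append_left]
    · rw [Fin.append_right]
  right_inv p := by
    ext i
    · simp [Fin.append_left]
    · simp [Fin.append_right]

lemma sum_append_split {k : ℕ} {A : Type*} [Fintype A] (F : (Fin (k + k) → A) → ℝ) :
    ∑ σ : Fin (k + k) → A, F σ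
      = ∑ σ₁ : Fin k → A, ∑ σ₂ : Fin k → A, F (Fin.append σ₁ σ₂) := by
  exact ((Fintype.sum_equiv (splitEquiv k k A).symm
    (fun p => F (Fin.append p.1 p.2)) F (fun p => rfl)).symm).trans
    (Fintype.sum_prod_type _)

end TreeLemmas

section OutF

variable {n k : ℕ} {A : Type} [Fintype A]

/-- the tree output as a function `Fin k → A`, for tree `u` on blocks `Xs`. -/
noncomputable def outF {I : Type*} (u : List A → I → A) (Xs : Fin k → I) : Fin k → A :=
  toFn (treeOutList u (List.ofFn Xs)) (by rw [treeOutList_length, List.length_ofFn])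

lemma outF_eq_iff {I : Type*} (u : List A → I → A) (Xs : Fin k → I) (σ : Fin k → A) :
    outF u Xs = σ ↔ treeOutList u (List.ofFn Xs) = List.ofFn σ :=
  toFn_eq_iff _ _ _

/-- the continuation tree after output prefix `σ₁`. -/
def contv (v : List A → (Fin n → Bool) → A) (σ₁ : Fin k → A) :
    List A → (Fin n → Bool) → A :=
  fun w X => v (List.ofFn σ₁ ++ w) X

lemma tree_split (v : List A → (Fin n → Bool) → A) (X₁ X₂ : Fin k → (Fin n → Bool))
    (σ₁ σ₂ : Fin k → A) :
    (treeOutList v (List.ofFn X₁ ++ List.ofFn X₂) = List.ofFn σ₁ ++ List.ofFn σ₂)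
    ↔ (outF v X₁ = σ₁ ∧ outF (contv v σ₁) X₂ = σ₂) := by
  rw [outF_eq_iff, outF_eq_iff, treeOutList_append]
  constructor
  · intro h
    have hlen : (treeOutList v (List.ofFn X₁)).length = (List.ofFn σ₁).length := by
      simp [treeOutList_length]
    obtain ⟨h1, h2⟩ := List.append_inj h hlen
    have htree : (fun (w' : List A) (X : Fin n → Bool)
        => v (treeOutList v (List.ofFn X₁) ++ w') X) = contv v σ₁ := by
      rw [h1]; rfl
    exact ⟨h1, by rw [← htree]; exact h2⟩
  · rintro ⟨h1, h2⟩
    have htree : (fun (w' : List A) (X : Fin n → Bool)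
        => v (treeOutList v (List.ofFn X₁) ++ w') X) = contv v σ₁ := by
      rw [h1]; rfl
    rw [htree, h1, h2]

end OutF

lemma prMass_eq_sum {Ω : Type*} [Fintype Ω] (p : Ω → ℝ) (P : Ω → Prop) :
    prMass p P = ∑ ω : Ω, if P ω then p ω else 0 := by
  rw [prMass, Finset.sum_filter]

lemma prMass_point {Ω : Type*} [Fintype Ω] (c : ℝ) (x : Ω) (Q : Ω → Prop) :
    prMass (fun _ => c) (fun ω => id ω = x ∧ Q ω) = if Q x then c else 0 := by
  rw [prMass_eq_sum]
  rw [Finset.sum_eq_single_of_mem x (Finset.mem_univ _)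
    (fun b _ hb => by rw [if_neg (fun hc => hb hc.1)])]
  by_cases hq : Q x
  · rw [if_pos ⟨rfl, hq⟩, if_pos hq]
  · rw [if_neg (fun hc => hq hc.2), if_neg hq]

set_option maxHeartbeats 2000000

/-- randomness recycling: if `Gen` is a `γ`-PRG for `(k,n,Σ)` block
decision trees and `Ext` is an average-case `(s − k·log₂|Σ|, β)`-extractor, then
`Gen′(x,y) = (Gen(x), Gen(Ext(x,y)))` is a `(2γ+β)`-PRG for `(2k,n,Σ)` block decision
trees. -/
theorem bdt_prg_recycle (n k s d : ℕ) (hn : 0 < n) (hk : 0 < k)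
    (A : Type) [Fintype A] (γ β : ℝ)
    (Gen : (Fin s → Bool) → Fin k → (Fin n → Bool))
    (Ext : (Fin s → Bool) → (Fin d → Bool) → (Fin s → Bool))
    (hGen : IsBDTPRG n k s A γ Gen)
    (hExt : IsAvgExtractor s d s ((s : ℝ) - k * Real.logb 2 (Fintype.card A : ℝ)) β Ext) :
    IsBDTPRG n (k + k) (s + d) A (2 * γ + β)
      (fun z => Fin.append (Gen fun i => z (Fin.castAdd d i))
        (Gen (Ext (fun i => z (Fin.castAdd d i)) fun i => z (Fin.natAdd s i)))) := by
  intro v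
  haveI : Nonempty A := ⟨v [] (fun _ => false)⟩
  -- notation
  let V : (Fin s → Bool) → (Fin k → A) := fun x => outF v (Gen x)
  let g : (Fin k → A) → (Fin s → Bool) → (Fin k → A) := fun σ₁ r => outF (contv v σ₁) (Gen r)
  let gU : (Fin k → A) → (Fin k → (Fin n → Bool)) → (Fin k → A) := fun σ₁ X₂ => outF (contv v σ₁) X₂
  let prV : (Fin k → A) → ℝ := fun σ₁ => pr (fun x : Fin s → Bool => V x = σ₁)
  let prU1 : (Fin k → A) → ℝ := fun σ₁ => pr (fun X₁ : Fin k → (Fin n → Bool) => outF v X₁ = σ₁)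
  let q1 : (Fin k → A) → (Fin k → A) → ℝ := fun σ₁ σ₂ => pr (fun r : Fin s → Bool => g σ₁ r = σ₂)
  let q2 : (Fin k → A) → (Fin k → A) → ℝ :=
    fun σ₁ σ₂ => pr (fun X₂ : Fin k → (Fin n → Bool) => gU σ₁ X₂ = σ₂)
  let P0 : (Fin k → A) → (Fin k → A) → ℝ := fun σ₁ σ₂ =>
    pr (fun p : (Fin s → Bool) × (Fin d → Bool) => V p.1 = σ₁ ∧ g σ₁ (Ext p.1 p.2) = σ₂)
  -- rewrite the real distribution
  have key0 : ∀ σ₁ σ₂ : Fin k → A,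
      pr (fun z : Fin (s + d) → Bool => treeOutList v
          (List.ofFn (Fin.append (Gen fun i => z (Fin.castAdd d i))
            (Gen (Ext (fun i => z (Fin.castAdd d i)) fun i => z (Fin.natAdd s i)))))
        = List.ofFn (Fin.append σ₁ σ₂)) = P0 σ₁ σ₂ := by
    intro σ₁ σ₂
    rw [pr_equiv ((splitEquiv s d Bool).symm)]
    apply pr_congr
    intro p
    show treeOutList v (List.ofFn (Fin.append
        (Gen fun i => Fin.append p.1 p.2 (Fin.castAdd d i))
        (Gen (Ext (fun i => Fin.append p.1 p.2 (Fin.castAdd d i))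
          fun i => Fin.append p.1 p.2 (Fin.natAdd s i)))))
      = List.ofFn (Fin.append σ₁ σ₂) ↔ _
    have h1 : (fun i => Fin.append p.1 p.2 (Fin.castAdd d i)) = p.1 :=
      funext fun i => Fin.append_left _ _ _
    have h2 : (fun i => Fin.append p.1 p.2 (Fin.natAdd s i)) = p.2 :=
      funext fun i => Fin.append_right _ _ _
    rw [h1, h2, List.ofFn_fin_append, List.ofFn_fin_append]
    exact tree_split v _ _ σ₁ σ₂
  -- rewrite the ideal distribution
  have key3 : ∀ σ₁ σ₂ : Fin k → A,
      pr (fun X : Fin (k + k) → (Fin n → Bool) => treeOutList v (List.ofFn X)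
        = List.ofFn (Fin.append σ₁ σ₂)) = prU1 σ₁ * q2 σ₁ σ₂ := by
    intro σ₁ σ₂
    rw [pr_equiv ((splitEquiv k k (Fin n → Bool)).symm)]
    rw [← pr_prod]
    apply pr_congr
    intro p
    show treeOutList v (List.ofFn (Fin.append p.1 p.2)) = List.ofFn (Fin.append σ₁ σ₂) ↔ _
    rw [List.ofFn_fin_append, List.ofFn_fin_append]
    exact tree_split v _ _ σ₁ σ₂
  -- restate hGen conveniently
  have hGen' : ∀ u : List A → (Fin n → Bool) → A, (1 / 2) * ∑ σ : Fin k → A,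
      |pr (fun x : Fin s → Bool => outF u (Gen x) = σ) - pr (fun X : Fin k → (Fin n → Bool) => outF u X = σ)| ≤ γ := by
    intro u
    have := hGen u
    refine le_trans (le_of_eq ?_) this
    congr 1
    apply Finset.sum_congr rfl
    intro σ _
    rw [pr_congr (fun x => outF_eq_iff u (Gen x) σ),
        pr_congr (fun X => outF_eq_iff u X σ)]
  have hγ : 0 ≤ γ := by
    have := hGen' v
    refine le_trans ?_ this
    positivity
  -- main rewriting of the goal
  show (1 / 2) * ∑ σ : Fin (k + k) → A, _ ≤ 2 * γ + β
  rw [sum_append_split]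
  have hre : ∀ σ₁ σ₂ : Fin k → A,
      |pr (fun x : Fin (s + d) → Bool => treeOutList v
          (List.ofFn ((fun z => Fin.append (Gen fun i => z (Fin.castAdd d i))
            (Gen (Ext (fun i => z (Fin.castAdd d i)) fun i => z (Fin.natAdd s i)))) x))
        = List.ofFn (Fin.append σ₁ σ₂))
      - pr (fun X : Fin (k + k) → (Fin n → Bool) => treeOutList v (List.ofFn X)
        = List.ofFn (Fin.append σ₁ σ₂))|
      = |P0 σ₁ σ₂ - prU1 σ₁ * q2 σ₁ σ₂| := by
    intro σ₁ σ₂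
    rw [key3 σ₁ σ₂, ← key0 σ₁ σ₂]
  simp only [hre]
  -- triangle inequality through the two hybrids
  have tri : ∀ σ₁ σ₂ : Fin k → A, |P0 σ₁ σ₂ - prU1 σ₁ * q2 σ₁ σ₂|
      ≤ |P0 σ₁ σ₂ - prV σ₁ * q1 σ₁ σ₂| + |prV σ₁ * q1 σ₁ σ₂ - prV σ₁ * q2 σ₁ σ₂|
        + |prV σ₁ * q2 σ₁ σ₂ - prU1 σ₁ * q2 σ₁ σ₂| := by
    intro σ₁ σ₂
    calc |P0 σ₁ σ₂ - prU1 σ₁ * q2 σ₁ σ₂|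
        ≤ |P0 σ₁ σ₂ - prV σ₁ * q2 σ₁ σ₂| + |prV σ₁ * q2 σ₁ σ₂ - prU1 σ₁ * q2 σ₁ σ₂| :=
          abs_sub_le _ _ _
      _ ≤ (|P0 σ₁ σ₂ - prV σ₁ * q1 σ₁ σ₂| + |prV σ₁ * q1 σ₁ σ₂ - prV σ₁ * q2 σ₁ σ₂|)
          + |prV σ₁ * q2 σ₁ σ₂ - prU1 σ₁ * q2 σ₁ σ₂| := by
          gcongr; exact abs_sub_le _ _ _
      _ = _ := rfl
  have sum_prV : ∑ σ₁ : Fin k → A, prV σ₁ = 1 := sum_pr_fiber V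
  -- cardinalities
  have hcS1 : (Fintype.card (Fin s → Bool) : ℝ) = 2 ^ s := by
    rw [Fintype.card_fun]; simp
  have hcS2 : (Fintype.card (Fin d → Bool) : ℝ) = 2 ^ d := by
    rw [Fintype.card_fun]; simp
  -- Bound 3
  have bound3 : (1 / 2) * ∑ σ₁ : Fin k → A, ∑ σ₂ : Fin k → A,
      |prV σ₁ * q2 σ₁ σ₂ - prU1 σ₁ * q2 σ₁ σ₂| ≤ γ := by
    have hpt : ∀ σ₁ σ₂ : Fin k → A, |prV σ₁ * q2 σ₁ σ₂ - prU1 σ₁ * q2 σ₁ σ₂|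
        = |prV σ₁ - prU1 σ₁| * q2 σ₁ σ₂ := by
      intro σ₁ σ₂
      rw [← sub_mul, abs_mul, abs_of_nonneg (pr_nonneg _)]
    have h1 : (1 / 2) * ∑ σ₁ : Fin k → A, ∑ σ₂ : Fin k → A,
        |prV σ₁ * q2 σ₁ σ₂ - prU1 σ₁ * q2 σ₁ σ₂|
        = (1 / 2) * ∑ σ₁ : Fin k → A, |prV σ₁ - prU1 σ₁| := by
      simp only [hpt]
      congr 1
      apply Finset.sum_congr rfl
      intro σ₁ _
      rw [← Finset.mul_sum, sum_pr_fiber (gU σ₁), mul_one]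
    rw [h1]
    exact hGen' v
  -- Bound 2
  have bound2 : (1 / 2) * ∑ σ₁ : Fin k → A, ∑ σ₂ : Fin k → A,
      |prV σ₁ * q1 σ₁ σ₂ - prV σ₁ * q2 σ₁ σ₂| ≤ γ := by
    have inner : ∀ σ₁ : Fin k → A, (1 / 2) * ∑ σ₂ : Fin k → A, |q1 σ₁ σ₂ - q2 σ₁ σ₂| ≤ γ :=
      fun σ₁ => hGen' (contv v σ₁)
    have h1 : (1 / 2) * ∑ σ₁ : Fin k → A, ∑ σ₂ : Fin k → A,
        |prV σ₁ * q1 σ₁ σ₂ - prV σ₁ * q2 σ₁ σ₂|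
        = ∑ σ₁ : Fin k → A, prV σ₁ * ((1 / 2) * ∑ σ₂ : Fin k → A, |q1 σ₁ σ₂ - q2 σ₁ σ₂|) := by
      rw [Finset.mul_sum]
      apply Finset.sum_congr rfl
      intro σ₁ _
      have hpt : ∀ σ₂ : Fin k → A, |prV σ₁ * q1 σ₁ σ₂ - prV σ₁ * q2 σ₁ σ₂|
          = prV σ₁ * |q1 σ₁ σ₂ - q2 σ₁ σ₂| := by
        intro σ₂
        rw [← mul_sub, abs_mul, abs_of_nonneg (pr_nonneg _)]
      simp only [hpt]
      rw [← Finset.mul_sum]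
      ring
    rw [h1]
    calc ∑ σ₁ : Fin k → A, prV σ₁ * ((1 / 2) * ∑ σ₂ : Fin k → A, |q1 σ₁ σ₂ - q2 σ₁ σ₂|)
        ≤ ∑ σ₁ : Fin k → A, prV σ₁ * γ :=
          Finset.sum_le_sum fun σ₁ _ =>
            mul_le_mul_of_nonneg_left (inner σ₁) (pr_nonneg _)
      _ = γ := by rw [← Finset.sum_mul, sum_prV, one_mul]
  -- Bound 1 (extractor step)
  let a : (Fin k → A) → (Fin s → Bool) → ℝ := fun σ₁ r =>
    pr (fun p : (Fin s → Bool) × (Fin d → Bool) => V p.1 = σ₁ ∧ Ext p.1 p.2 = r)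
  have hP0 : ∀ σ₁ σ₂ : Fin k → A,
      P0 σ₁ σ₂ = ∑ r : Fin s → Bool, if g σ₁ r = σ₂ then a σ₁ r else 0 := by
    intro σ₁ σ₂
    refine (pr_fiber_decomp (fun p : (Fin s → Bool) × (Fin d → Bool) => Ext p.1 p.2)
      (fun p => V p.1 = σ₁) (fun r => g σ₁ r = σ₂)).trans
      (Finset.sum_congr rfl fun r _ => ?_)
    split_ifs <;> rfl
  have hM1 : ∀ σ₁ σ₂ : Fin k → A, prV σ₁ * q1 σ₁ σ₂
      = ∑ r : Fin s → Bool, if g σ₁ r = σ₂ then prV σ₁ / 2 ^ s else 0 := by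
    intro σ₁ σ₂
    show prV σ₁ * pr (fun r : Fin s → Bool => g σ₁ r = σ₂) = _
    rw [pr_eq_sum, hcS1, Finset.sum_div, Finset.mul_sum]
    apply Finset.sum_congr rfl
    intro r _
    split_ifs with h
    · rw [mul_one_div]
    · simp
  have habs1 : ∀ σ₁ σ₂ : Fin k → A, |P0 σ₁ σ₂ - prV σ₁ * q1 σ₁ σ₂|
      ≤ ∑ r : Fin s → Bool, if g σ₁ r = σ₂ then |a σ₁ r - prV σ₁ / 2 ^ s| else 0 := by
    intro σ₁ σ₂
    rw [hP0, hM1, ← Finset.sum_sub_distrib]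
    refine (Finset.abs_sum_le_sum_abs _ _).trans (Finset.sum_le_sum fun r _ => ?_)
    split_ifs with h <;> simp
  have inner1 : ∀ σ₁ : Fin k → A,
      ∑ σ₂ : Fin k → A, (∑ r : Fin s → Bool,
        if g σ₁ r = σ₂ then |a σ₁ r - prV σ₁ / 2 ^ s| else 0)
      = ∑ r : Fin s → Bool, |a σ₁ r - prV σ₁ / 2 ^ s| := by
    intro σ₁
    rw [Finset.sum_comm]
    apply Finset.sum_congr rfl
    intro r _
    rw [Finset.sum_eq_single_of_mem (g σ₁ r) (Finset.mem_univ _)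
      (fun b _ hb => by rw [if_neg (fun h => hb h.symm)])]
    exact if_pos rfl
  -- the uniform mass function
  have hp0 : ∀ ω : Fin s → Bool, 0 ≤ (fun _ : Fin s → Bool => ((2 : ℝ) ^ s)⁻¹) ω :=
    fun ω => by positivity
  have hps : (∑ ω : Fin s → Bool, (fun _ : Fin s → Bool => ((2 : ℝ) ^ s)⁻¹) ω) = 1 := by
    show (∑ _ω : Fin s → Bool, ((2 : ℝ) ^ s)⁻¹) = 1
    rw [Finset.sum_const, Finset.card_univ, nsmul_eq_mul, hcS1]
    field_simp
  have prMass_const : ∀ {Ω : Type} [Fintype Ω] (c : ℝ) (P : Ω → Prop),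
      prMass (fun _ => c) P = (∑ ω : Ω, if P ω then (1 : ℝ) else 0) * c := by
    intro Ω _ c P
    rw [prMass, Finset.sum_const, nsmul_eq_mul, Finset.sum_boole]
  have hApos : (0 : ℝ) < Fintype.card A := by exact_mod_cast Fintype.card_pos
  -- min-entropy hypothesis
  have hent : (∑ σ₁ : Fin k → A, ⨆ x : Fin s → Bool,
      prMass (fun _ : Fin s → Bool => ((2 : ℝ) ^ s)⁻¹) (fun ω : Fin s → Bool => id ω = x ∧ V ω = σ₁))
      ≤ (2 : ℝ) ^ (-((s : ℝ) - k * Real.logb 2 (Fintype.card A : ℝ))) := by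
    have hpt : ∀ (σ₁ : Fin k → A) (x : Fin s → Bool),
        prMass (fun _ : Fin s → Bool => ((2 : ℝ) ^ s)⁻¹) (fun ω : Fin s → Bool => id ω = x ∧ V ω = σ₁)
        = if V x = σ₁ then ((2 : ℝ) ^ s)⁻¹ else 0 := by
      intro σ₁ x
      have h0 := prMass_point (Ω := Fin s → Bool) ((2 : ℝ) ^ s)⁻¹ x (fun ω => V ω = σ₁)
      refine h0.trans ?_
      split_ifs <;> rfl
    have hsup : ∀ σ₁ : Fin k → A,
        (⨆ x : Fin s → Bool, prMass (fun _ : Fin s → Bool => ((2 : ℝ) ^ s)⁻¹) (fun ω : Fin s → Bool => id ω = x ∧ V ω = σ₁))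
        ≤ ((2 : ℝ) ^ s)⁻¹ := by
      intro σ₁
      apply ciSup_le
      intro x
      rw [hpt]
      split_ifs
      · exact le_refl _
      · positivity
    calc (∑ σ₁ : Fin k → A, ⨆ x : Fin s → Bool,
          prMass (fun _ : Fin s → Bool => ((2 : ℝ) ^ s)⁻¹) (fun ω : Fin s → Bool => id ω = x ∧ V ω = σ₁))
        ≤ ∑ _σ₁ : Fin k → A, ((2 : ℝ) ^ s)⁻¹ := Finset.sum_le_sum fun σ₁ _ => hsup σ₁
      _ = (Fintype.card A : ℝ) ^ k * ((2 : ℝ) ^ s)⁻¹ := by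
          rw [Finset.sum_const, Finset.card_univ, nsmul_eq_mul, Fintype.card_fun]
          push_cast
          simp
      _ = (2 : ℝ) ^ (-((s : ℝ) - k * Real.logb 2 (Fintype.card A : ℝ))) := by
          rw [neg_sub, Real.rpow_sub two_pos, Real.rpow_natCast,
            mul_comm (k : ℝ) (Real.logb 2 (Fintype.card A : ℝ)),
            Real.rpow_mul (le_of_lt two_pos), Real.rpow_logb two_pos (by norm_num) hApos,
            Real.rpow_natCast, div_eq_mul_inv]
  have hext2 := hExt (Fin s → Bool) (Fin k → A) (fun _ : Fin s → Bool => ((2 : ℝ) ^ s)⁻¹) id V hp0 hps hent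
  -- identify the terms
  have hma : ∀ (σ₁ : Fin k → A) (r : Fin s → Bool),
      (∑ y : Fin d → Bool, prMass (fun _ : Fin s → Bool => ((2 : ℝ) ^ s)⁻¹) (fun ω : Fin s → Bool => V ω = σ₁ ∧ Ext (id ω) y = r))
        / 2 ^ d = a σ₁ r := by
    intro σ₁ r
    show _ = pr (fun q : (Fin s → Bool) × (Fin d → Bool) => V q.1 = σ₁ ∧ Ext q.1 q.2 = r)
    rw [pr_eq_sum, Fintype.card_prod, Fintype.sum_prod_type]
    simp only [prMass_const]
    rw [← Finset.sum_mul, Finset.sum_comm]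
    push_cast
    rw [hcS1, hcS2]
    have h2s : ((2 : ℝ) ^ s) ≠ 0 := by positivity
    have h2d : ((2 : ℝ) ^ d) ≠ 0 := by positivity
    field_simp
    rfl
  have hmb : ∀ σ₁ : Fin k → A,
      prMass (fun _ : Fin s → Bool => ((2 : ℝ) ^ s)⁻¹) (fun ω : Fin s → Bool => V ω = σ₁) / 2 ^ s = prV σ₁ / 2 ^ s := by
    intro σ₁
    congr 1
    rw [prMass_const]
    show _ = pr (fun x : Fin s → Bool => V x = σ₁)
    rw [pr_eq_sum, hcS1, div_eq_mul_inv]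
  have final1 : (1 / 2) * ∑ σ₁ : Fin k → A, ∑ r : Fin s → Bool,
      |a σ₁ r - prV σ₁ / 2 ^ s| ≤ β := by
    refine le_trans (le_of_eq ?_) hext2
    congr 1
    apply Finset.sum_congr rfl
    intro σ₁ _
    apply Finset.sum_congr rfl
    intro r _
    rw [hma, hmb]
  have bound1 : (1 / 2) * ∑ σ₁ : Fin k → A, ∑ σ₂ : Fin k → A,
      |P0 σ₁ σ₂ - prV σ₁ * q1 σ₁ σ₂| ≤ β := by
    refine le_trans ?_ final1
    apply mul_le_mul_of_nonneg_left ?_ (by norm_num)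
    apply Finset.sum_le_sum
    intro σ₁ _
    calc ∑ σ₂ : Fin k → A, |P0 σ₁ σ₂ - prV σ₁ * q1 σ₁ σ₂|
        ≤ ∑ σ₂ : Fin k → A, (∑ r : Fin s → Bool,
            if g σ₁ r = σ₂ then |a σ₁ r - prV σ₁ / 2 ^ s| else 0) :=
          Finset.sum_le_sum fun σ₂ _ => habs1 σ₁ σ₂
      _ = ∑ r : Fin s → Bool, |a σ₁ r - prV σ₁ / 2 ^ s| := inner1 σ₁
  -- combine
  calc (1 / 2) * ∑ σ₁ : Fin k → A, ∑ σ₂ : Fin k → A, |P0 σ₁ σ₂ - prU1 σ₁ * q2 σ₁ σ₂|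
      ≤ (1 / 2) * ∑ σ₁ : Fin k → A, ∑ σ₂ : Fin k → A,
          (|P0 σ₁ σ₂ - prV σ₁ * q1 σ₁ σ₂| + |prV σ₁ * q1 σ₁ σ₂ - prV σ₁ * q2 σ₁ σ₂|
            + |prV σ₁ * q2 σ₁ σ₂ - prU1 σ₁ * q2 σ₁ σ₂|) := by
        apply mul_le_mul_of_nonneg_left ?_ (by norm_num)
        exact Finset.sum_le_sum fun σ₁ _ =>
          Finset.sum_le_sum fun σ₂ _ => tri σ₁ σ₂
    _ = (1 / 2) * ∑ σ₁ : Fin k → A, ∑ σ₂ : Fin k → A, |P0 σ₁ σ₂ - prV σ₁ * q1 σ₁ σ₂|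
        + (1 / 2) * ∑ σ₁ : Fin k → A, ∑ σ₂ : Fin k → A,
            |prV σ₁ * q1 σ₁ σ₂ - prV σ₁ * q2 σ₁ σ₂|
        + (1 / 2) * ∑ σ₁ : Fin k → A, ∑ σ₂ : Fin k → A,
            |prV σ₁ * q2 σ₁ σ₂ - prU1 σ₁ * q2 σ₁ σ₂| := by
        simp only [Finset.sum_add_distrib]
        ring
    _ ≤ β + γ + γ := add_le_add (add_le_add bound1 bound2) bound3
    _ ≤ 2 * γ + β := by linarith
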